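/- Define numbers T̂_{n,ν}(α) by T̂_{n,n}(α) = 1, T̂_{n,−1}(α) = 0, and T̂_{n+1,ν}(α) = T̂_{n,ν−1}(α) − (2α+ν+1)(ν+1) T̂_{n,ν}(α) for 0 ≤ ν ≤ n. Then for every n ≥ 0 and every complex τ, (τ²/4 + α²)^n = Σ_{ν=0}^{n} T̂_{n,ν}(α) (α+1+iτ/2)_ν (α+1−iτ/2)_ν. -/

import Mathlib

open Complex Finset

lemma aux_expansion (α c : ℂ) (T : ℕ → ℕ → ℂ)
    (hdiag : ∀ n, T n n = 1)
    (hrec : ∀ n ν, ν ≤ n → T (n + 1) ν =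
      (if ν = 0 then 0 else T n (ν - 1)) - (2 * α + ν + 1) * ((ν : ℂ) + 1) * T n ν)
    (P : ℕ → ℂ) (hP0 : P 0 = 1)
    (hstep : ∀ ν : ℕ, c * P ν = P (ν + 1) - (2 * α + ν + 1) * ((ν : ℂ) + 1) * P ν) :
    ∀ n : ℕ, c ^ n = ∑ ν ∈ Finset.range (n + 1), T n ν * P ν := by
  intro n
  induction n with
  | zero => simp [hdiag 0, hP0]
  | succ n ih =>
    calc c ^ (n + 1) = c * c ^ n := by ring
      _ = ∑ ν ∈ Finset.range (n + 1), c * (T n ν * P ν) := by rw [ih, Finset.mul_sum]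
      _ = ∑ ν ∈ Finset.range (n + 1),
            (T n ν * P (ν + 1) - (2 * α + ν + 1) * ((ν : ℂ) + 1) * T n ν * P ν) :=
          Finset.sum_congr rfl fun ν _ => by linear_combination (T n ν) * hstep ν
      _ = (∑ ν ∈ Finset.range (n + 1), T n ν * P (ν + 1)) -
            ∑ ν ∈ Finset.range (n + 1), (2 * α + ν + 1) * ((ν : ℂ) + 1) * T n ν * P ν :=
          Finset.sum_sub_distrib _ _
      _ = ∑ ν ∈ Finset.range (n + 2), T (n + 1) ν * P ν := by
          rw [Finset.sum_range_succ (fun ν => T (n + 1) ν * P ν), hdiag]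
          rw [show ∑ ν ∈ Finset.range (n + 1), T (n + 1) ν * P ν
              = ∑ ν ∈ Finset.range (n + 1),
                ((if ν = 0 then (0:ℂ) else T n (ν - 1)) * P ν
                  - (2 * α + ν + 1) * ((ν : ℂ) + 1) * T n ν * P ν) from
            Finset.sum_congr rfl fun ν hν => by
              rw [hrec n ν (Nat.lt_succ_iff.mp (Finset.mem_range.mp hν))]; ring]
          rw [Finset.sum_sub_distrib,
            Finset.sum_range_succ' (fun ν => (if ν = 0 then (0:ℂ) else T n (ν - 1)) * P ν) n]
          simp only [Nat.succ_ne_zero, if_false, Nat.succ_sub_one, if_true, Nat.add_sub_cancel]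
          rw [Finset.sum_range_succ (fun ν => T n ν * P (ν + 1)) n, hdiag]
          ring

/-- The numbers `T̂_{n,ν}(α)` defined by `T̂_{n,n} = 1`, `T̂_{n,−1} = 0` and
`T̂_{n+1,ν} = T̂_{n,ν−1} − (2α+ν+1)(ν+1) T̂_{n,ν}` expand the powers of
`τ²/4 + α²` in the central factorial basis:
`(τ²/4 + α²)^n = Σ_{ν=0}^{n} T̂_{n,ν}(α) (α+1+iτ/2)_ν (α+1−iτ/2)_ν`. -/
theorem power_central_factorial_expansion (α : ℂ) (T : ℕ → ℕ → ℂ)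
    (hdiag : ∀ n, T n n = 1)
    (hrec : ∀ n ν, ν ≤ n → T (n + 1) ν =
      (if ν = 0 then 0 else T n (ν - 1)) - (2 * α + ν + 1) * ((ν : ℂ) + 1) * T n ν) :
    ∀ (n : ℕ) (τ : ℂ),
      (τ ^ 2 / 4 + α ^ 2) ^ n =
        ∑ ν ∈ Finset.range (n + 1), T n ν *
          ((∏ σ ∈ Finset.range ν, (α + 1 + Complex.I * τ / 2 + σ)) *
            (∏ σ ∈ Finset.range ν, (α + 1 - Complex.I * τ / 2 + σ))) := by
  intro n τ
  have hx2 : (Complex.I * τ / 2) * (Complex.I * τ / 2) = -(τ ^ 2 / 4) := by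
    linear_combination (τ ^ 2 / 4) * Complex.I_sq
  exact aux_expansion α (τ ^ 2 / 4 + α ^ 2) T hdiag hrec
    (fun ν => (∏ σ ∈ Finset.range ν, (α + 1 + Complex.I * τ / 2 + σ)) *
      (∏ σ ∈ Finset.range ν, (α + 1 - Complex.I * τ / 2 + σ)))
    (by simp)
    (fun ν => by
      simp only [Finset.prod_range_succ]
      linear_combination ((∏ σ ∈ Finset.range ν, (α + 1 + Complex.I * τ / 2 + σ)) *
        (∏ σ ∈ Finset.range ν, (α + 1 - Complex.I * τ / 2 + σ))) * hx2) n
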